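/- Let R be a ring and M an R-module with c-rk(M) ≥ n, where c-rk is cube rank. Then M has a subquotient which is a semisimple R-module of length n. -/

import Mathlib

open DirectSum

section Aux

variable {R : Type*} [CommRing R]

/-- `N` is (isomorphic to) a subquotient of `M`. -/
def Subq (R : Type*) [CommRing R] (M : Type*) [AddCommGroup M] [Module R M]
    (N : Type*) [AddCommGroup N] [Module R N] : Prop :=
  ∃ (B : Submodule R M) (f : B →ₗ[R] N), Function.Surjective f

theorem Subq.trans {M Q N : Type*} [AddCommGroup M] [Module R M] [AddCommGroup Q] [Module R Q]
    [AddCommGroup N] [Module R N] (h1 : Subq R M Q) (h2 : Subq R Q N) : Subq R M N := by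
  obtain ⟨B, f, hf⟩ := h1
  obtain ⟨B', g, hg⟩ := h2
  have hres : ∀ x ∈ B'.comap f, f x ∈ B' := fun x hx => hx
  have hsurj : Function.Surjective (f.restrict hres) := by
    rintro ⟨y, hy⟩
    obtain ⟨x, rfl⟩ := hf y
    exact ⟨⟨x, hy⟩, Subtype.ext (by simp [LinearMap.restrict_apply])⟩
  refine ⟨(B'.comap f).map B.subtype,
    (g.comp (f.restrict hres)).comp
      (Submodule.equivMapOfInjective B.subtype (Submodule.injective_subtype B)
        (B'.comap f)).symm.toLinearMap, ?_⟩
  exact (hg.comp hsurj).comp (LinearEquiv.surjective _)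

theorem exists_simple_subq {V : Type*} [AddCommGroup V] [Module R V] (hV : ∃ v : V, v ≠ 0) :
    ∃ m : Ideal R, IsSimpleModule R (R ⧸ m) ∧ Subq R V (R ⧸ m) := by
  obtain ⟨v, hv⟩ := hV
  set f := LinearMap.toSpanSingleton R V v with hfdef
  have hk : LinearMap.ker f ≠ ⊤ := by
    intro h
    have h1 : (1 : R) ∈ LinearMap.ker f := h ▸ Submodule.mem_top
    rw [LinearMap.mem_ker, hfdef, LinearMap.toSpanSingleton_apply_one] at h1
    exact hv h1
  obtain ⟨m, hm, hle⟩ := Ideal.exists_le_maximal _ hk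
  refine ⟨m, ?_, ?_⟩
  · rw [isSimpleModule_iff_isCoatom]
    exact Ideal.isMaximal_def.mp hm
  · refine ⟨LinearMap.range f,
      (Submodule.mapQ (LinearMap.ker f) m LinearMap.id (by simpa using hle)).comp
        (f.quotKerEquivRange).symm.toLinearMap, ?_⟩
    have hs : Function.Surjective
        (Submodule.mapQ (LinearMap.ker f) m LinearMap.id (by simpa using hle)) := by
      intro y
      obtain ⟨x, rfl⟩ := Submodule.Quotient.mk_surjective m y
      exact ⟨Submodule.Quotient.mk x, by rw [Submodule.mapQ_apply]; rfl⟩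
    simp only [LinearMap.coe_comp, LinearEquiv.coe_coe]
    exact hs.comp (LinearEquiv.surjective _)

theorem subq_directSum {n : ℕ} {V W : Fin n → Type*} [∀ i, AddCommGroup (V i)]
    [∀ i, Module R (V i)] [∀ i, AddCommGroup (W i)] [∀ i, Module R (W i)]
    (h : ∀ i, Subq R (V i) (W i)) : Subq R (⨁ i, V i) (⨁ i, W i) := by
  choose B f hf using h
  set Φ : (⨁ i, (B i : Type _)) →ₗ[R] ⨁ i, V i :=
    toModule R (Fin n) _ fun i => (lof R (Fin n) V i).comp (B i).subtype with hΦdef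
  have key : ∀ (x : ⨁ i, (B i : Type _)) (j : Fin n), (Φ x) j = ((x j : B j) : V j) := by
    intro x
    induction x using DirectSum.induction_on with
    | zero => intro j; simp
    | of i b =>
        intro j
        rw [hΦdef, ← lof_eq_of R, toModule_lof]
        rcases eq_or_ne i j with rfl | hij
        · simp
        · have h1 : ((lof R (Fin n) V i) ((B i).subtype b)) j = 0 := by
            rw [DirectSum.lof_eq_of, DirectSum.of_eq_of_ne _ _ _ hij.symm]
          have h2 : ((lof R (Fin n) (fun i => (B i : Type _)) i) b) j = 0 := by
            rw [DirectSum.lof_eq_of, DirectSum.of_eq_of_ne _ _ _ hij.symm]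
          rw [LinearMap.comp_apply, h1, h2, ZeroMemClass.coe_zero]
    | add x y hx hy =>
        intro j
        rw [map_add, DirectSum.add_apply, hx j, hy j, DirectSum.add_apply, Submodule.coe_add]
  have hΦ : Function.Injective Φ := by
    intro x y hxy
    refine DirectSum.ext fun j => Subtype.coe_injective ?_
    show ((x j : B j) : V j) = ((y j : B j) : V j)
    rw [← key x j, ← key y j, hxy]
  set Ψ : (⨁ i, (B i : Type _)) →ₗ[R] ⨁ i, W i :=
    toModule R (Fin n) _ fun i => (lof R (Fin n) W i).comp (f i) with hΨdef
  have hΨ : Function.Surjective Ψ := by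
    intro w
    induction w using DirectSum.induction_on with
    | zero => exact ⟨0, map_zero _⟩
    | of i x =>
        obtain ⟨b, rfl⟩ := hf i x
        exact ⟨lof R (Fin n) _ i b, by rw [hΨdef, toModule_lof]; rfl⟩
    | add x y hx hy =>
        obtain ⟨a, rfl⟩ := hx
        obtain ⟨b, rfl⟩ := hy
        exact ⟨a + b, map_add _ _ _⟩
  exact ⟨LinearMap.range Φ, Ψ.comp (LinearEquiv.ofInjective Φ hΦ).symm.toLinearMap,
    hΨ.comp (LinearEquiv.surjective _)⟩

theorem lof_range_iSupIndep {n : ℕ} (S : Fin n → Type*) [∀ i, AddCommGroup (S i)]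
    [∀ i, Module R (S i)] :
    iSupIndep (fun i => LinearMap.range (lof R (Fin n) S i)) := by
  intro i
  rw [Submodule.disjoint_def]
  rintro x ⟨b, rfl⟩ hx
  have hker : (⨆ j, ⨆ _ : j ≠ i, LinearMap.range (lof R (Fin n) S j)) ≤
      LinearMap.ker (component R (Fin n) S i) := by
    refine iSup_le fun j => iSup_le fun hj => ?_
    rintro _ ⟨c, rfl⟩
    rw [LinearMap.mem_ker, component.of, dif_neg hj]
  have := hker hx
  rw [LinearMap.mem_ker, component.lof_self] at this
  rw [this, map_zero]

theorem lof_range_iSup_eq_top {n : ℕ} (S : Fin n → Type*) [∀ i, AddCommGroup (S i)]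
    [∀ i, Module R (S i)] :
    (⨆ i, LinearMap.range (lof R (Fin n) S i)) = ⊤ := by
  rw [Submodule.eq_top_iff']
  intro x
  induction x using DirectSum.induction_on with
  | zero => exact zero_mem _
  | of i b =>
      exact le_iSup (fun i => LinearMap.range (lof R (Fin n) S i)) i ⟨b, rfl⟩
  | add x y hx hy => exact add_mem hx hy

end Aux

/-- If `M` is an `R`-module with `c-rk(M) ≥ n`, i.e. `M` has a subquotient which
is an (internal) direct sum of `n` nonzero submodules, then `M` has a subquotient
which is a semisimple module of length `n`, i.e. an internal direct sum of `n`
simple submodules. -/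
theorem stmt_14 (R : Type*) [CommRing R] (M : Type*) [AddCommGroup M] [Module R M]
    (n : ℕ)
    (h : ∃ (A B : Submodule R M) (_ : A ≤ B)
        (P : Fin n → Submodule R (B ⧸ Submodule.comap B.subtype A)),
      (∀ i, P i ≠ ⊥) ∧ iSupIndep P ∧ (⨆ i, P i) = ⊤) :
    ∃ (A B : Submodule R M) (_ : A ≤ B)
        (P : Fin n → Submodule R (B ⧸ Submodule.comap B.subtype A)),
      (∀ i, IsSimpleModule R (P i)) ∧ iSupIndep P ∧ (⨆ i, P i) = ⊤ := by
  obtain ⟨A, B, hAB, P, hne, hind, hsup⟩ := h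
  have hInt : DirectSum.IsInternal P :=
    DirectSum.isInternal_submodule_of_iSupIndep_of_iSup_eq_top hind hsup
  have h1 : Subq R M (DirectSum (Fin n) (fun i => (P i : Type _))) :=
    ⟨B, ((LinearEquiv.ofBijective (DirectSum.coeLinearMap P) hInt).symm.toLinearMap).comp
        (Submodule.comap B.subtype A).mkQ,
      by
        simp only [LinearMap.coe_comp, LinearEquiv.coe_coe]
        exact (LinearEquiv.surjective _).comp (Submodule.mkQ_surjective _)⟩
  have hnz : ∀ i, ∃ v : (P i : Type _), v ≠ 0 := by
    intro i
    obtain ⟨x, hx, hx0⟩ := (Submodule.ne_bot_iff _).mp (hne i)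
    exact ⟨⟨x, hx⟩, by simpa using hx0⟩
  choose m hmsimple hmsubq using fun i => exists_simple_subq (R := R) (hnz i)
  have h2 : Subq R (DirectSum (Fin n) (fun i => (P i : Type _))) (⨁ i, R ⧸ m i) := subq_directSum hmsubq
  obtain ⟨B₀, f, hf⟩ := h1.trans h2
  have hK : Submodule.comap B₀.subtype ((LinearMap.ker f).map B₀.subtype) = LinearMap.ker f :=
    Submodule.comap_map_eq_of_injective (Submodule.injective_subtype B₀) _
  let e : (B₀ ⧸ Submodule.comap B₀.subtype ((LinearMap.ker f).map B₀.subtype))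
      ≃ₗ[R] ⨁ i, R ⧸ m i :=
    (Submodule.quotEquivOfEq _ _ hK).trans (f.quotKerEquivOfSurjective hf)
  refine ⟨(LinearMap.ker f).map B₀.subtype, B₀, Submodule.map_subtype_le _ _,
    fun i => (LinearMap.range (lof R (Fin n) (fun i => R ⧸ m i) i)).map (e.symm : _ →ₗ[R] _),
    ?_, ?_, ?_⟩
  · intro i
    haveI := hmsimple i
    have hinj : Function.Injective ⇑(lof R (Fin n) (fun i => R ⧸ m i) i) := by
      intro a b hab
      have := congrArg (⇑(component R (Fin n) (fun i => R ⧸ m i) i)) hab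
      rwa [component.lof_self, component.lof_self] at this
    haveI : IsSimpleModule R (LinearMap.range (lof R (Fin n) (fun i => R ⧸ m i) i)) :=
      IsSimpleModule.congr
        (LinearEquiv.ofInjective (lof R (Fin n) (fun i => R ⧸ m i) i) hinj).symm
    exact IsSimpleModule.congr (N := LinearMap.range (lof R (Fin n) (fun i => R ⧸ m i) i))
      ((e.symm.submoduleMap (LinearMap.range (lof R (Fin n) (fun i => R ⧸ m i) i))).symm)
  · have := (iSupIndep_map_orderIso_iff (Submodule.orderIsoMapComap e.symm)).mpr
      (lof_range_iSupIndep (fun i => R ⧸ m i))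
    exact this
  · rw [← Submodule.map_iSup, lof_range_iSup_eq_top, Submodule.map_top]
    exact LinearMap.range_eq_top.mpr (LinearEquiv.surjective _)
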